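/- Let φ be a norm on ℝ^{n+1}, let W = {x : φ°(x) ≤ 1}, let S ⊆ ℝ^{n+1}, let c ≥ 0 and r̄ > 0, and suppose that the (n+1)-dimensional Lebesgue outer measure satisfies |S + sW| = c·s^{n+1} for every 0 < s < r̄, where + denotes Minkowski sum. Then S is a finite set and card(S)·|W| = c. -/

import Mathlib

open MeasureTheory Filter
open scoped RealInnerProductSpace ENNReal Pointwise Topology NNReal

noncomputable section

/-- `ℝ^{n+1}` with the Euclidean inner product. -/
abbrev Eu (n : ℕ) := EuclideanSpace ℝ (Fin (n + 1))

/-- `φ` is a norm on `ℝ^{n+1}`: positive away from `0`, absolutely homogeneous,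
and subadditive. -/
def IsNorm {n : ℕ} (φ : Eu n → ℝ) : Prop :=
  (∀ v : Eu n, v ≠ 0 → 0 < φ v) ∧
  (∀ (c : ℝ) (v : Eu n), φ (c • v) = |c| * φ v) ∧
  (∀ v w : Eu n, φ (v + w) ≤ φ v + φ w)

/-- `φ` is strictly convex: equality in the triangle inequality forces linear dependence. -/
def StrictlyConvexNorm {n : ℕ} (φ : Eu n → ℝ) : Prop :=
  ∀ v w : Eu n, φ (v + w) = φ v + φ w → φ v • w = φ w • v

/-- The dual (polar) norm `φ°(u) = sup {⟨u,v⟩ : φ(v) ≤ 1}`. -/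
def dualN {n : ℕ} (φ : Eu n → ℝ) (u : Eu n) : ℝ :=
  sSup {r : ℝ | ∃ v : Eu n, φ v ≤ 1 ∧ r = ⟪u, v⟫}

/-- The `φ`-distance `δ_A^φ(x) = inf {φ°(x − a) : a ∈ A}`. -/
def adist {n : ℕ} (φ : Eu n → ℝ) (A : Set (Eu n)) (x : Eu n) : ℝ :=
  sInf ((fun a => dualN φ (x - a)) '' A)

/-- The `φ`-unit normal bundle `N^φ(A)`. -/
def normalBundle {n : ℕ} (φ : Eu n → ℝ) (A : Set (Eu n)) : Set (Eu n × Eu n) :=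
  {p | p.1 ∈ closure A ∧ dualN φ p.2 = 1 ∧ ∃ s : ℝ, 0 < s ∧ adist φ A (p.1 + s • p.2) = s}

/-- The `φ`-reach function `r_A^φ(a,η) = sup {s > 0 : δ_A^φ(a + sη) = s}`, valued in `[0,∞]`. -/
def reach {n : ℕ} (φ : Eu n → ℝ) (A : Set (Eu n)) (a η : Eu n) : ℝ≥0∞ :=
  sSup {s : ℝ≥0∞ | ∃ t : ℝ, 0 < t ∧ adist φ A (a + t • η) = t ∧ s = ENNReal.ofReal t}

/-- The `φ`-cut locus of `A`. -/
def cutLocus {n : ℕ} (φ : Eu n → ℝ) (A : Set (Eu n)) : Set (Eu n) :=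
  {x | ∃ a η : Eu n, (a, η) ∈ normalBundle φ A ∧ reach φ A a η < ⊤ ∧
      x = a + (reach φ A a η).toReal • η}

/-- The domain `Γ^φ(A)` of the `φ`-distance flow. -/
def Gamma {n : ℕ} (φ : Eu n → ℝ) (A : Set (Eu n)) : Set (Eu n × Eu n × ℝ) :=
  {q | (q.1, q.2.1) ∈ normalBundle φ A ∧ 0 < q.2.2 ∧
      ENNReal.ofReal q.2.2 < reach φ A q.1 q.2.1}

lemma IsNorm.zero {n : ℕ} {φ : Eu n → ℝ} (hφ : IsNorm φ) : φ 0 = 0 := by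
  have := hφ.2.1 0 0
  simpa using this

lemma IsNorm.nonneg {n : ℕ} {φ : Eu n → ℝ} (hφ : IsNorm φ) (v : Eu n) : 0 ≤ φ v := by
  rcases eq_or_ne v 0 with rfl | h
  · simp [hφ.zero]
  · exact (hφ.1 v h).le

lemma IsNorm.exists_bounds {n : ℕ} {φ : Eu n → ℝ} (hφ : IsNorm φ) :
    ∃ m M : ℝ, 0 < m ∧ 0 < M ∧ ∀ v : Eu n, m * ‖v‖ ≤ φ v ∧ φ v ≤ M * ‖v‖ := by
  obtain ⟨hpos, hhom, hadd⟩ := hφ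
  set M : ℝ := (∑ i : Fin (n+1), φ (EuclideanSpace.single i (1:ℝ))) + 1 with hM
  have habs : ∀ (v : Eu n) (i : Fin (n+1)), |v i| ≤ ‖v‖ := by
    intro v i
    have h1 := abs_real_inner_le_norm v (EuclideanSpace.single i (1:ℝ))
    have h2 : ⟪v, EuclideanSpace.single i (1:ℝ)⟫ = v i := by
      simpa using EuclideanSpace.inner_single_right (𝕜 := ℝ) i 1 v
    simpa [h2] using h1
  have hdecomp : ∀ v : Eu n, v = ∑ i, v i • EuclideanSpace.single i (1:ℝ) := by
    intro v; ext j
    rw [WithLp.ofLp_sum, Finset.sum_apply]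
    simp [EuclideanSpace.single_apply]
  have hMpos : 0 < M := by
    have : 0 ≤ ∑ i : Fin (n+1), φ (EuclideanSpace.single i (1:ℝ)) :=
      Finset.sum_nonneg fun i _ => IsNorm.nonneg ⟨hpos, hhom, hadd⟩ _
    linarith
  have hub : ∀ v : Eu n, φ v ≤ M * ‖v‖ := by
    intro v
    calc φ v = φ (∑ i, v i • EuclideanSpace.single i (1:ℝ)) := by rw [← hdecomp]
    _ ≤ ∑ i, φ (v i • EuclideanSpace.single i (1:ℝ)) :=
        Finset.le_sum_of_subadditive φ (IsNorm.zero ⟨hpos, hhom, hadd⟩).le hadd _ _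
    _ = ∑ i, |v i| * φ (EuclideanSpace.single i (1:ℝ)) := by simp [hhom]
    _ ≤ ∑ i, ‖v‖ * φ (EuclideanSpace.single i (1:ℝ)) := by
        refine Finset.sum_le_sum fun i _ => ?_
        exact mul_le_mul_of_nonneg_right (habs v i) (IsNorm.nonneg ⟨hpos, hhom, hadd⟩ _)
    _ = (∑ i : Fin (n+1), φ (EuclideanSpace.single i (1:ℝ))) * ‖v‖ := by
        rw [Finset.sum_mul]
        exact Finset.sum_congr rfl fun i _ => mul_comm _ _
    _ ≤ M * ‖v‖ := by
        apply mul_le_mul_of_nonneg_right _ (norm_nonneg v)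
        simp [hM]
  -- continuity of φ
  have hneg : ∀ v : Eu n, φ (-v) = φ v := by
    intro v
    have := hhom (-1) v
    simpa using this
  have hlip : LipschitzWith (⟨M, hMpos.le⟩ : ℝ≥0) φ := by
    apply LipschitzWith.of_dist_le_mul
    intro x y
    rw [Real.dist_eq, dist_eq_norm]
    have h1 : φ x - φ y ≤ M * ‖x - y‖ := by
      have := hadd y (x - y)
      simp only [add_sub_cancel] at this
      have := hub (x - y)
      linarith
    have h2 : φ y - φ x ≤ M * ‖x - y‖ := by
      have h3 := hadd x (y - x)
      simp only [add_sub_cancel] at h3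
      have h4 := hub (y - x)
      have : ‖y - x‖ = ‖x - y‖ := norm_sub_rev y x
      linarith [this ▸ h4]
    exact abs_sub_le_iff.2 ⟨h1, h2⟩
  have hcont : Continuous φ := hlip.continuous
  -- min on sphere
  have hsph : (Metric.sphere (0 : Eu n) 1).Nonempty := by
    exact NormedSpace.sphere_nonempty.2 zero_le_one
  obtain ⟨x0, hx0, hmin⟩ := (isCompact_sphere (0 : Eu n) 1).exists_isMinOn hsph
    hcont.continuousOn
  have hx0norm : ‖x0‖ = 1 := by simpa using hx0
  have hx0ne : x0 ≠ 0 := by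
    intro h; rw [h] at hx0norm; simp at hx0norm
  set m : ℝ := φ x0 with hm
  have hmpos : 0 < m := hpos x0 hx0ne
  refine ⟨m, M, hmpos, hMpos, fun v => ⟨?_, hub v⟩⟩
  rcases eq_or_ne v 0 with rfl | hv
  · simp [IsNorm.zero ⟨hpos, hhom, hadd⟩]
  · have hvn : ‖v‖ ≠ 0 := norm_ne_zero_iff.2 hv
    have hmem : (‖v‖⁻¹ • v) ∈ Metric.sphere (0 : Eu n) 1 := by
      simp [norm_smul, abs_of_nonneg (inv_nonneg.2 (norm_nonneg v)), inv_mul_cancel₀ hvn]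
    have hle : m ≤ φ (‖v‖⁻¹ • v) := hmin hmem
    have heq : φ (‖v‖⁻¹ • v) = ‖v‖⁻¹ * φ v := by
      rw [hhom]; congr 1
      exact abs_of_nonneg (inv_nonneg.2 (norm_nonneg v))
    rw [heq] at hle
    have hvpos : 0 < ‖v‖ := lt_of_le_of_ne (norm_nonneg v) (Ne.symm hvn)
    calc m * ‖v‖ ≤ (‖v‖⁻¹ * φ v) * ‖v‖ := mul_le_mul_of_nonneg_right hle hvpos.le
    _ = φ v := by field_simp

section Dual

variable {n : ℕ} {φ : Eu n → ℝ}

lemma dual_set_nonempty (hφ : IsNorm φ) (u : Eu n) :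
    {r : ℝ | ∃ v : Eu n, φ v ≤ 1 ∧ r = ⟪u, v⟫}.Nonempty :=
  ⟨0, 0, by simp [hφ.zero]⟩

lemma dual_set_bddAbove (hφ : IsNorm φ) (u : Eu n) :
    BddAbove {r : ℝ | ∃ v : Eu n, φ v ≤ 1 ∧ r = ⟪u, v⟫} := by
  obtain ⟨m, M, hm, hM, hb⟩ := hφ.exists_bounds
  refine ⟨‖u‖ * (1 / m), ?_⟩
  rintro r ⟨v, hv, rfl⟩
  have h1 : ‖v‖ ≤ 1 / m := by
    have := (hb v).1
    rw [le_div_iff₀ hm, mul_comm]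
    linarith
  calc ⟪u, v⟫ ≤ ‖u‖ * ‖v‖ := real_inner_le_norm u v
  _ ≤ ‖u‖ * (1 / m) := mul_le_mul_of_nonneg_left h1 (norm_nonneg u)

lemma le_dual (hφ : IsNorm φ) {u v : Eu n} (hv : φ v ≤ 1) : ⟪u, v⟫ ≤ dualN φ u :=
  le_csSup (dual_set_bddAbove hφ u) ⟨v, hv, rfl⟩

lemma dual_nonneg (hφ : IsNorm φ) (u : Eu n) : 0 ≤ dualN φ u := by
  have := le_dual hφ (u := u) (v := 0) (by simp [hφ.zero])
  simpa using this

lemma dual_le_of_bound {m : ℝ} (hφ : IsNorm φ) (hm : 0 < m)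
    (hb : ∀ v : Eu n, m * ‖v‖ ≤ φ v) (u : Eu n) : dualN φ u ≤ ‖u‖ * (1 / m) := by
  apply csSup_le (dual_set_nonempty hφ u)
  rintro r ⟨v, hv, rfl⟩
  have h1 : ‖v‖ ≤ 1 / m := by
    have := hb v
    rw [le_div_iff₀ hm, mul_comm]
    linarith
  calc ⟪u, v⟫ ≤ ‖u‖ * ‖v‖ := real_inner_le_norm u v
  _ ≤ ‖u‖ * (1 / m) := mul_le_mul_of_nonneg_left h1 (norm_nonneg u)

lemma norm_le_of_dual_le {M : ℝ} (hφ : IsNorm φ) (hM : 0 < M)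
    (hb : ∀ v : Eu n, φ v ≤ M * ‖v‖) {u : Eu n} (hu : dualN φ u ≤ 1) : ‖u‖ ≤ M := by
  rcases eq_or_ne u 0 with rfl | hune
  · simpa using hM.le
  · have hun : (0:ℝ) < ‖u‖ := norm_pos_iff.2 hune
    have hv : φ ((M * ‖u‖)⁻¹ • u) ≤ 1 := by
      rw [hφ.2.1]
      have : |(M * ‖u‖)⁻¹| = (M * ‖u‖)⁻¹ :=
        abs_of_nonneg (inv_nonneg.2 (by positivity))
      rw [this]
      have := hb u
      rw [inv_mul_le_iff₀ (by positivity)]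
      linarith
    have h2 := le_dual hφ (u := u) hv
    rw [real_inner_smul_right, real_inner_self_eq_norm_sq] at h2
    have h3 : (M * ‖u‖)⁻¹ * ‖u‖ ^ 2 = ‖u‖ / M := by
      field_simp
    rw [h3] at h2
    have h4 := le_trans h2 hu
    rw [div_le_one hM] at h4
    exact h4

lemma dual_add (hφ : IsNorm φ) (u u' : Eu n) :
    dualN φ (u + u') ≤ dualN φ u + dualN φ u' := by
  apply csSup_le (dual_set_nonempty hφ _)
  rintro r ⟨v, hv, rfl⟩
  rw [inner_add_left]
  exact add_le_add (le_dual hφ hv) (le_dual hφ hv)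

lemma dual_neg (hφ : IsNorm φ) (u : Eu n) : dualN φ (-u) = dualN φ u := by
  have hset : ∀ w : Eu n, {r : ℝ | ∃ v : Eu n, φ v ≤ 1 ∧ r = ⟪-w, v⟫}
      = {r : ℝ | ∃ v : Eu n, φ v ≤ 1 ∧ r = ⟪w, v⟫} := by
    intro w
    ext r
    constructor
    · rintro ⟨v, hv, rfl⟩
      refine ⟨-v, ?_, by simp⟩
      have : φ (-v) = φ v := by
        have := hφ.2.1 (-1) v
        simpa using this
      rw [this]; exact hv
    · rintro ⟨v, hv, rfl⟩
      refine ⟨-v, ?_, by simp⟩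
      have : φ (-v) = φ v := by
        have := hφ.2.1 (-1) v
        simpa using this
      rw [this]; exact hv
  unfold dualN
  rw [hset]

lemma dual_continuous (hφ : IsNorm φ) : Continuous (dualN φ) := by
  obtain ⟨m, M, hm, hM, hb⟩ := hφ.exists_bounds
  have key : ∀ u u' : Eu n, dualN φ u - dualN φ u' ≤ (1 / m) * ‖u - u'‖ := by
    intro u u'
    have h1 : dualN φ u ≤ dualN φ u' + dualN φ (u - u') := by
      have := dual_add hφ u' (u - u')
      simpa using this
    have h2 : dualN φ (u - u') ≤ ‖u - u'‖ * (1 / m) :=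
      dual_le_of_bound hφ hm (fun v => (hb v).1) _
    nlinarith
  have hlip : LipschitzWith (⟨1 / m, by positivity⟩ : ℝ≥0) (dualN φ) := by
    apply LipschitzWith.of_dist_le_mul
    intro x y
    rw [Real.dist_eq, dist_eq_norm]
    refine abs_sub_le_iff.2 ⟨key x y, ?_⟩
    have := key y x
    rwa [norm_sub_rev] at this
  exact hlip.continuous

end Dual

section WFacts

variable {n : ℕ} {φ : Eu n → ℝ}

lemma W_isCompact (hφ : IsNorm φ) : IsCompact {x : Eu n | dualN φ x ≤ 1} := by
  obtain ⟨m, M, hm, hM, hb⟩ := hφ.exists_bounds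
  have hclosed : IsClosed {x : Eu n | dualN φ x ≤ 1} :=
    isClosed_Iic.preimage (dual_continuous hφ)
  have hbdd : {x : Eu n | dualN φ x ≤ 1} ⊆ Metric.closedBall 0 M := by
    intro x hx
    rw [Metric.mem_closedBall, dist_zero_right]
    exact norm_le_of_dual_le hφ hM (fun v => (hb v).2) hx
  exact (isCompact_closedBall (0 : Eu n) M).of_isClosed_subset hclosed hbdd

lemma W_norm_bound (hφ : IsNorm φ) :
    ∃ M : ℝ, 0 < M ∧ ∀ x : Eu n, dualN φ x ≤ 1 → ‖x‖ ≤ M := by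
  obtain ⟨m, M, hm, hM, hb⟩ := hφ.exists_bounds
  exact ⟨M, hM, fun x hx => norm_le_of_dual_le hφ hM (fun v => (hb v).2) hx⟩

lemma W_vol_pos (hφ : IsNorm φ) : 0 < volume {x : Eu n | dualN φ x ≤ 1} := by
  obtain ⟨m, M, hm, hM, hb⟩ := hφ.exists_bounds
  have hsub : Metric.ball (0 : Eu n) m ⊆ {x : Eu n | dualN φ x ≤ 1} := by
    intro x hx
    rw [Metric.mem_ball, dist_zero_right] at hx
    have h1 : dualN φ x ≤ ‖x‖ * (1 / m) := dual_le_of_bound hφ hm (fun v => (hb v).1) x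
    have h2 : ‖x‖ * (1 / m) ≤ 1 := by
      rw [mul_one_div, div_le_one hm]
      exact hx.le
    exact le_trans h1 h2
  exact lt_of_lt_of_le (Metric.measure_ball_pos volume 0 hm) (measure_mono hsub)

lemma W_vol_ne_top (hφ : IsNorm φ) : volume {x : Eu n | dualN φ x ≤ 1} ≠ ⊤ :=
  (W_isCompact hφ).measure_lt_top.ne

end WFacts

lemma finset_sep {n : ℕ} (F : Finset (Eu n)) :
    ∃ ε : ℝ, 0 < ε ∧ ∀ a ∈ F, ∀ b ∈ F, a ≠ b → ε ≤ dist a b := by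
  classical
  set P := (F ×ˢ F).filter (fun p => p.1 ≠ p.2) with hP
  rcases P.eq_empty_or_nonempty with h | h
  · refine ⟨1, one_pos, fun a ha b hb hab => ?_⟩
    exact absurd (show (a, b) ∈ P by simp [hP, ha, hb, hab]) (by rw [h]; simp)
  · obtain ⟨p, hp, hmin⟩ := P.exists_min_image (fun p => dist p.1 p.2) h
    have hpne : p.1 ≠ p.2 := (Finset.mem_filter.1 hp).2
    refine ⟨dist p.1 p.2, dist_pos.2 hpne, fun a ha b hb hab => ?_⟩
    exact hmin (a, b) (by simp [hP, ha, hb, hab])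

lemma finset_vol {n : ℕ} {φ : Eu n → ℝ} (hφ : IsNorm φ) (F : Finset (Eu n)) :
    ∃ s0 : ℝ, 0 < s0 ∧ ∀ s : ℝ, 0 < s → s < s0 →
      volume (⋃ a ∈ F, ((a : Eu n) +ᵥ s • {x : Eu n | dualN φ x ≤ 1}))
        = F.card * volume (s • {x : Eu n | dualN φ x ≤ 1}) := by
  classical
  set W := {x : Eu n | dualN φ x ≤ 1} with hW
  obtain ⟨M, hM, hMb⟩ := W_norm_bound hφ
  obtain ⟨ε, hε, hsep⟩ := finset_sep F
  refine ⟨ε / (2 * M), by positivity, fun s hs hss0 => ?_⟩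
  have hWc : IsCompact W := W_isCompact hφ
  have hmeas : ∀ a : Eu n, MeasurableSet ((a : Eu n) +ᵥ s • W) := by
    intro a
    have h1 : IsCompact (s • W) := hWc.smul s
    have h2 : IsCompact (a +ᵥ s • W) := by
      rw [← Set.image_vadd]
      exact h1.image (continuous_const_vadd a)
    exact h2.isClosed.measurableSet
  have hdisj : Set.PairwiseDisjoint (↑F : Set (Eu n)) (fun a => a +ᵥ s • W) := by
    intro a ha b hb hab
    simp only [Function.onFun]
    rw [Set.disjoint_left]
    rintro x hx1 hx2
    rw [Set.mem_vadd_set] at hx1 hx2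
    obtain ⟨y1, hy1, hxy1⟩ := hx1
    obtain ⟨y2, hy2, hxy2⟩ := hx2
    obtain ⟨w1, hw1, rfl⟩ := hy1
    obtain ⟨w2, hw2, rfl⟩ := hy2
    have heq : a + s • w1 = b + s • w2 := by
      simp only [vadd_eq_add] at hxy1 hxy2
      exact hxy1.trans hxy2.symm
    have hab' : a - b = s • (w2 - w1) := by
      rw [smul_sub, sub_eq_sub_iff_add_eq_add, heq, add_comm]
    have hnorm : ‖a - b‖ ≤ s * (2 * M) := by
      rw [hab', norm_smul, Real.norm_eq_abs, abs_of_pos hs]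
      have : ‖w2 - w1‖ ≤ 2 * M := by
        calc ‖w2 - w1‖ ≤ ‖w2‖ + ‖w1‖ := norm_sub_le _ _
        _ ≤ M + M := add_le_add (hMb w2 hw2) (hMb w1 hw1)
        _ = 2 * M := by ring
      exact mul_le_mul_of_nonneg_left this hs.le
    have hlt : s * (2 * M) < ε := (lt_div_iff₀ (by positivity)).1 hss0
    have := hsep a ha b hb hab
    rw [dist_eq_norm] at this
    linarith
  rw [measure_biUnion_finset hdisj (fun a _ => hmeas a)]
  have hvadd : ∀ a : Eu n, volume (a +ᵥ s • W) = volume (s • W) := fun a =>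
    measure_vadd (μ := volume) a (s • W)
  simp only [hvadd, Finset.sum_const, nsmul_eq_mul]

/-- if `|S + sW| = c·s^{n+1}` for all `0 < s < r̄`, then `S` is finite and
`card(S)·|W| = c`. -/
theorem finite_from_minkowski_growth {n : ℕ} (φ : Eu n → ℝ) (hφ : IsNorm φ)
    (S : Set (Eu n)) (c : ℝ) (hc : 0 ≤ c) (rbar : ℝ) (hrbar : 0 < rbar)
    (hvol : ∀ s : ℝ, 0 < s → s < rbar →
      volume (S + s • {x : Eu n | dualN φ x ≤ 1}) = ENNReal.ofReal (c * s ^ (n + 1))) :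
    S.Finite ∧ (S.ncard : ℝ) * (volume {x : Eu n | dualN φ x ≤ 1}).toReal = c := by
  classical
  set W := {x : Eu n | dualN φ x ≤ 1} with hWdef
  set w : ℝ := (volume W).toReal with hwdef
  have hWpos : 0 < volume W := W_vol_pos hφ
  have hWne : volume W ≠ ⊤ := W_vol_ne_top hφ
  have hwpos : 0 < w := ENNReal.toReal_pos hWpos.ne' hWne
  have hrank : Module.finrank ℝ (Eu n) = n + 1 := finrank_euclideanSpace_fin
  have hsmul : ∀ s : ℝ, 0 < s →
      volume (s • W) = ENNReal.ofReal (s ^ (n + 1)) * volume W := by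
    intro s hs
    rw [MeasureTheory.Measure.addHaar_smul volume, hrank, abs_of_pos (pow_pos hs _)]
  have key : ∀ F : Finset (Eu n), ↑F ⊆ S → (F.card : ℝ) * w ≤ c := by
    intro F hFS
    obtain ⟨s0, hs0, hvol'⟩ := finset_vol hφ F
    set s : ℝ := min s0 rbar / 2 with hsdef
    have hmin : 0 < min s0 rbar := lt_min hs0 hrbar
    have hs : 0 < s := by rw [hsdef]; linarith
    have hsr : s < rbar := by
      have := min_le_right s0 rbar
      rw [hsdef]; linarith
    have hss0 : s < s0 := by
      have := min_le_left s0 rbar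
      rw [hsdef]; linarith
    have hsub : (⋃ a ∈ F, (a +ᵥ s • W)) ⊆ S + s • W := by
      intro x hx
      simp only [Set.mem_iUnion] at hx
      obtain ⟨a, ha, hx⟩ := hx
      rw [Set.mem_vadd_set] at hx
      obtain ⟨y, hy, rfl⟩ := hx
      rw [vadd_eq_add]
      exact Set.add_mem_add (hFS ha) hy
    have h2 : volume (⋃ a ∈ F, (a +ᵥ s • W)) ≤ volume (S + s • W) := measure_mono hsub
    rw [hvol' s hs hss0, hvol s hs hsr, hsmul s hs] at h2
    have h3 := ENNReal.toReal_mono (by simp) h2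
    rw [ENNReal.toReal_mul, ENNReal.toReal_mul, ENNReal.toReal_natCast,
      ENNReal.toReal_ofReal (by positivity),
      ENNReal.toReal_ofReal (mul_nonneg hc (by positivity))] at h3
    have h4 : ((F.card : ℝ) * w) * s ^ (n + 1) ≤ c * s ^ (n + 1) := by
      rw [mul_assoc, mul_comm w]; exact h3
    exact le_of_mul_le_mul_right h4 (pow_pos hs (n + 1))
  have hfin : S.Finite := by
    by_contra hinf
    obtain ⟨T, hTS, hTfin, hTcard⟩ := Set.Infinite.exists_subset_ncard_eq hinf (⌈c / w⌉₊ + 1)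
    have hk := key hTfin.toFinset (by rwa [Set.Finite.coe_toFinset])
    rw [Set.ncard_eq_toFinset_card T hTfin] at hTcard
    rw [hTcard] at hk
    have h6 : ((⌈c / w⌉₊ : ℝ) + 1) ≤ c / w := by
      rw [le_div_iff₀ hwpos]
      push_cast at hk ⊢
      linarith
    have h5 : c / w ≤ (⌈c / w⌉₊ : ℝ) := Nat.le_ceil _
    linarith
  refine ⟨hfin, ?_⟩
  set F := hfin.toFinset with hF
  obtain ⟨s0, hs0, hvol'⟩ := finset_vol hφ F
  set s : ℝ := min s0 rbar / 2 with hsdef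
  have hmin : 0 < min s0 rbar := lt_min hs0 hrbar
  have hs : 0 < s := by rw [hsdef]; linarith
  have hsr : s < rbar := by
    have := min_le_right s0 rbar
    rw [hsdef]; linarith
  have hss0 : s < s0 := by
    have := min_le_left s0 rbar
    rw [hsdef]; linarith
  have hunion : S + s • W = ⋃ a ∈ F, (a +ᵥ s • W) := by
    ext x
    simp only [Set.mem_add, Set.mem_iUnion, Set.mem_vadd_set, vadd_eq_add]
    constructor
    · rintro ⟨a, haS, y, hy, rfl⟩
      exact ⟨a, hfin.mem_toFinset.2 haS, y, hy, rfl⟩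
    · rintro ⟨a, ha, y, hy, rfl⟩
      exact ⟨a, hfin.mem_toFinset.1 ha, y, hy, rfl⟩
  have heq := hvol s hs hsr
  rw [hunion, hvol' s hs hss0, hsmul s hs] at heq
  have h3 := congrArg ENNReal.toReal heq
  rw [ENNReal.toReal_mul, ENNReal.toReal_mul, ENNReal.toReal_natCast,
    ENNReal.toReal_ofReal (by positivity),
    ENNReal.toReal_ofReal (mul_nonneg hc (by positivity))] at h3
  have hcard : (S.ncard : ℝ) = (F.card : ℝ) := by
    rw [Set.ncard_eq_toFinset_card S hfin]
  rw [hcard]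
  have h4 : ((F.card : ℝ) * w) * s ^ (n + 1) = c * s ^ (n + 1) := by
    rw [mul_assoc, mul_comm w]; exact h3
  exact mul_right_cancel₀ (pow_ne_zero (n + 1) hs.ne') h4
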